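/- There exist constants 0 < c₀ ≤ c₁ such that for all x ∈ ℝ, y > 0, and f > 0, with R = (f/y)·[[1,-x],[-x,x²+y²]] and γ = (x+iy-i)/(x+iy+i), one has c₀·‖R‖ ≤ f/(1-|γ|²) ≤ c₁·‖R‖, where ‖R‖ is the operator norm of R. -/

import Mathlib

open Matrix Complex
open scoped Matrix.Norms.L2Operator

lemma norm_M_le (x y : ℝ) :
    ‖(!![1, -x; -x, x ^ 2 + y ^ 2] : Matrix (Fin 2) (Fin 2) ℝ)‖ ≤ 1 + x ^ 2 + y ^ 2 := by
  set M : Matrix (Fin 2) (Fin 2) ℝ := !![1, -x; -x, x ^ 2 + y ^ 2] with hM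
  rw [Matrix.l2_opNorm_def]
  refine ContinuousLinearMap.opNorm_le_bound _ (by positivity) fun v => ?_
  have hv : ((Matrix.toEuclideanLin.trans LinearMap.toContinuousLinearMap) M) v
      = (WithLp.equiv 2 (Fin 2 → ℝ)).symm (M *ᵥ (WithLp.equiv 2 (Fin 2 → ℝ)) v) := rfl
  rw [hv, EuclideanSpace.norm_eq, EuclideanSpace.norm_eq]
  simp only [WithLp.equiv_symm_apply, WithLp.ofLp_toLp, Fin.sum_univ_two, Real.norm_eq_abs, _root_.sq_abs]
  have e0 : (M *ᵥ (WithLp.equiv 2 (Fin 2 → ℝ)) v) 0 = v 0 - x * v 1 := by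
    simp [hM, Matrix.mulVec, dotProduct, Fin.sum_univ_two]; ring
  have e1 : (M *ᵥ (WithLp.equiv 2 (Fin 2 → ℝ)) v) 1 = -x * v 0 + (x^2+y^2) * v 1 := by
    simp [hM, Matrix.mulVec, dotProduct, Fin.sum_univ_two]
  rw [e0, e1]
  have hT : (0:ℝ) ≤ 1 + x ^ 2 + y ^ 2 := by positivity
  rw [show (1 + x ^ 2 + y ^ 2) * Real.sqrt (v 0 ^ 2 + v 1 ^ 2)
      = Real.sqrt ((1 + x ^ 2 + y ^ 2)^2 * (v 0 ^ 2 + v 1 ^ 2)) by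
    rw [Real.sqrt_mul (by positivity), Real.sqrt_sq hT]]
  apply Real.sqrt_le_sqrt
  nlinarith [sq_nonneg (x * v 0 + v 1), sq_nonneg ((x^2+y^2) * v 0 + x * v 1),
    sq_nonneg (y * v 0), sq_nonneg (y * v 1)]

lemma half_le_norm_M (x y : ℝ) :
    (1 + x ^ 2 + y ^ 2) / 2 ≤ ‖(!![1, -x; -x, x ^ 2 + y ^ 2] : Matrix (Fin 2) (Fin 2) ℝ)‖ := by
  set M : Matrix (Fin 2) (Fin 2) ℝ := !![1, -x; -x, x ^ 2 + y ^ 2] with hM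
  have key : ∀ w : Fin 2 → ℝ, ‖(EuclideanSpace.equiv (Fin 2) ℝ).symm (M *ᵥ w)‖
      ≤ ‖M‖ * ‖(EuclideanSpace.equiv (Fin 2) ℝ).symm w‖ := by
    intro w
    simpa using Matrix.l2_opNorm_mulVec M ((EuclideanSpace.equiv (Fin 2) ℝ).symm w)
  have h0 := key ![1, 0]
  have h1 := key ![0, 1]
  have n0 : ‖(EuclideanSpace.equiv (Fin 2) ℝ).symm (![1,0] : Fin 2 → ℝ)‖ = 1 := by
    rw [EuclideanSpace.norm_eq]
    simp [Fin.sum_univ_two]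
  have n1 : ‖(EuclideanSpace.equiv (Fin 2) ℝ).symm (![0,1] : Fin 2 → ℝ)‖ = 1 := by
    rw [EuclideanSpace.norm_eq]
    simp [Fin.sum_univ_two]
  have m0 : M *ᵥ ![1,0] = ![1, -x] := by
    funext i; fin_cases i <;> simp [hM, Matrix.mulVec, dotProduct, Fin.sum_univ_two]
  have m1 : M *ᵥ ![0,1] = ![-x, x^2+y^2] := by
    funext i; fin_cases i <;> simp [hM, Matrix.mulVec, dotProduct, Fin.sum_univ_two]
  rw [m0, n0, mul_one] at h0
  rw [m1, n1, mul_one] at h1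
  have b0 : (1:ℝ) ≤ ‖M‖ := by
    refine le_trans ?_ h0
    rw [EuclideanSpace.norm_eq, Real.le_sqrt (by norm_num) (by positivity)]
    simp [Fin.sum_univ_two]
    nlinarith [sq_nonneg x]
  have b1 : x^2 + y^2 ≤ ‖M‖ := by
    refine le_trans ?_ h1
    rw [EuclideanSpace.norm_eq, Real.le_sqrt (by positivity) (by positivity)]
    simp [Fin.sum_univ_two]
    nlinarith [sq_nonneg x]
  linarith

/-- There are constants `0 < c₀ ≤ c₁` such that for all `x ∈ ℝ`, `y > 0`, `f > 0`,
with `R = (f/y)·[[1,-x],[-x,x²+y²]]` and `γ` the Cayley image of `x+iy`,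
`c₀‖R‖ ≤ f/(1-|γ|²) ≤ c₁‖R‖`, where `‖R‖` is the operator norm. -/
theorem opNorm_comparable_carousel_weight :
    ∃ c₀ c₁ : ℝ, 0 < c₀ ∧ c₀ ≤ c₁ ∧
      ∀ x y f : ℝ, 0 < y → 0 < f →
        c₀ * ‖((f / y) • !![1, -x; -x, x ^ 2 + y ^ 2] : Matrix (Fin 2) (Fin 2) ℝ)‖ ≤
            f / (1 - ‖(x + y * I - I) / (x + y * I + I)‖ ^ 2) ∧
          f / (1 - ‖(x + y * I - I) / (x + y * I + I)‖ ^ 2) ≤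
            c₁ * ‖((f / y) • !![1, -x; -x, x ^ 2 + y ^ 2] : Matrix (Fin 2) (Fin 2) ℝ)‖ := by
  refine ⟨1/4, 1, by norm_num, by norm_num, fun x y f hy hf => ?_⟩
  set M : Matrix (Fin 2) (Fin 2) ℝ := !![1, -x; -x, x ^ 2 + y ^ 2] with hM
  have hRnorm : ‖((f / y) • M : Matrix (Fin 2) (Fin 2) ℝ)‖ = (f/y) * ‖M‖ := by
    rw [norm_smul, Real.norm_of_nonneg (by positivity)]
  have hpos : (0:ℝ) < x^2 + (y+1)^2 := by positivity
  have habs : ‖(x + y * I - I) / (x + y * I + I)‖ ^ 2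
      = (x^2 + (y-1)^2) / (x^2 + (y+1)^2) := by
    rw [show ((x:ℂ) + y * I - I) = (x:ℂ) + (y-1 : ℝ) * I by push_cast; ring,
        show ((x:ℂ) + y * I + I) = (x:ℂ) + (y+1 : ℝ) * I by push_cast; ring,
        norm_div, div_pow, Complex.sq_norm, Complex.sq_norm,
        Complex.normSq_add_mul_I, Complex.normSq_add_mul_I]
  have hone : 1 - ‖(x + y * I - I) / (x + y * I + I)‖ ^ 2
      = 4*y / (x^2 + (y+1)^2) := by
    rw [habs]
    field_simp
    ring
  have hval : f / (1 - ‖(x + y * I - I) / (x + y * I + I)‖ ^ 2)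
      = f * (x^2 + (y+1)^2) / (4*y) := by
    rw [hone, div_div_eq_mul_div]
  have hup := norm_M_le x y
  have hlo := half_le_norm_M x y
  constructor
  · rw [hval, hRnorm, show (1/4 : ℝ) * (f/y * ‖M‖) = f * ‖M‖ / (4*y) by field_simp]
    gcongr
    nlinarith
  · rw [hval, hRnorm, show (1:ℝ) * (f/y * ‖M‖) = f * (4 * ‖M‖) / (4*y) by field_simp]
    gcongr
    nlinarith [sq_nonneg (y-1)]
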